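/- Let G=(V,E,w) be a connected weighted undirected graph with Laplacian matrix L. Then the walk centrality of any vertex j satisfies H_j = d · (e_j − π)^T L† (e_j − π), where L† is the Moore–Penrose pseudoinverse of L and e_j is the j-th standard basis vector. -/

import Mathlib

open Matrix BigOperators Finset

/-- For a connected weighted undirected graph with Laplacian `L = D - A`, the walk
centrality of any vertex `j` satisfies `H_j = d · (e_j − π)ᵀ L† (e_j − π)`, where `L†` is the
Moore–Penrose pseudoinverse of `L` (characterized by the four Penrose conditions), `e_j` is the
`j`-th standard basis vector, and `H_j = Σ_i π_i H_{ij}` with hitting times `H i j` characterized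
by their first-step recurrence. -/
theorem walk_centrality_eq_quadratic_form
    (n : ℕ) (hn : 0 < n)
    (A : Matrix (Fin n) (Fin n) ℝ)
    (hsym : A.IsSymm)
    (hnonneg : ∀ i j, 0 ≤ A i j)
    (hloop : ∀ i, A i i = 0)
    (hconn : ∀ i j : Fin n, ∃ k : ℕ, (A ^ k) i j ≠ 0)
    (deg : Fin n → ℝ) (hdeg : ∀ i, deg i = ∑ j, A i j)
    (d : ℝ) (hd : d = ∑ i, deg i)
    (pi' : Fin n → ℝ) (hpi : ∀ i, pi' i = deg i / d)
    (L : Matrix (Fin n) (Fin n) ℝ) (hL : L = Matrix.diagonal deg - A)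
    (Ldag : Matrix (Fin n) (Fin n) ℝ)
    (hMP1 : L * Ldag * L = L)
    (hMP2 : Ldag * L * Ldag = Ldag)
    (hMP3 : (L * Ldag)ᵀ = L * Ldag)
    (hMP4 : (Ldag * L)ᵀ = Ldag * L)
    (H : Fin n → Fin n → ℝ)
    (hHdiag : ∀ j, H j j = 0)
    (hHrec : ∀ i j, i ≠ j → H i j = 1 + ∑ k, (A i k / deg i) * H k j)
    (Hc : Fin n → ℝ) (hHc : ∀ j, Hc j = ∑ i, pi' i * H i j)
    (j : Fin n) :
    Hc j = d * ((Pi.single j 1 - pi') ⬝ᵥ (Ldag *ᵥ (Pi.single j 1 - pi'))) := by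
  classical
  by_cases hd0 : d = 0
  · have hpi0 : ∀ i, pi' i = 0 := fun i => by rw [hpi, hd0, div_zero]
    rw [hHc, hd0]
    simp [hpi0]
  -- main case : d ≠ 0
  set h : Fin n → ℝ := fun i => H i j with hh
  set u : Fin n → ℝ := Pi.single j 1 - pi' with hu
  -- all degrees are nonzero
  have hdegne : ∀ i, deg i ≠ 0 := by
    intro i hdi
    have hrow : ∀ k, A i k = 0 := by
      intro k
      have hs : ∑ k, A i k = 0 := by rw [← hdeg i, hdi]
      exact (Finset.sum_eq_zero_iff_of_nonneg (fun k _ => hnonneg i k)).mp hs k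
        (Finset.mem_univ k)
    by_cases h2 : ∀ m : Fin n, m = i
    · apply hd0
      rw [hd]
      exact Finset.sum_eq_zero fun m _ => by rw [h2 m, hdi]
    · push_neg at h2
      obtain ⟨m, hm⟩ := h2
      obtain ⟨k, hk⟩ := hconn i m
      apply hk
      cases k with
      | zero => simp [Matrix.one_apply_ne (Ne.symm hm)]
      | succ k => simp [pow_succ', Matrix.mul_apply, hrow]
  -- explicit formula for (L *ᵥ h) i
  have hLv : ∀ i, (L *ᵥ h) i = deg i * H i j - ∑ k, A i k * H k j := by
    intro i
    rw [hL]
    simp only [Matrix.mulVec, dotProduct, Matrix.sub_apply, Matrix.diagonal_apply,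
      sub_mul, Finset.sum_sub_distrib, ite_mul, zero_mul]
    rw [Finset.sum_ite_eq]
    simp [hh]
  -- off-diagonal values
  have hstep : ∀ i, i ≠ j → (L *ᵥ h) i = deg i := by
    intro i hij
    rw [hLv i]
    have hrec := hHrec i j hij
    have : deg i * H i j = deg i + ∑ k, A i k * H k j := by
      rw [hrec, mul_add, mul_one, Finset.mul_sum]
      congr 1
      refine Finset.sum_congr rfl fun k _ => ?_
      rw [← mul_assoc, mul_comm (deg i), div_mul_cancel₀ _ (hdegne i)]
    rw [this]
    ring
  -- columns of L sum to zero
  have hcol : ∀ k, ∑ i, L i k = 0 := by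
    intro k
    have hA : ∑ i, A i k = deg k := by
      rw [hdeg k]
      exact Finset.sum_congr rfl fun i _ => hsym.apply k i
    rw [hL]
    simp only [Matrix.sub_apply, Matrix.diagonal_apply, Finset.sum_sub_distrib]
    rw [Finset.sum_ite_eq' Finset.univ k deg, hA]
    simp
  -- total sum of L *ᵥ h is zero
  have hsum0 : ∑ i, (L *ᵥ h) i = 0 := by
    have : ∑ i, (L *ᵥ h) i = ∑ k, (∑ i, L i k) * h k := by
      simp only [Matrix.mulVec, dotProduct]
      rw [Finset.sum_comm]
      simp [Finset.sum_mul]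
    rw [this]
    simp [hcol]
  -- value at j
  have hstepj : (L *ᵥ h) j = deg j - d := by
    have h1 : ∑ i ∈ Finset.univ.erase j, (L *ᵥ h) i + (L *ᵥ h) j = 0 := by
      rw [Finset.sum_erase_add Finset.univ _ (Finset.mem_univ j)]
      exact hsum0
    have h2 : ∑ i ∈ Finset.univ.erase j, (L *ᵥ h) i
        = ∑ i ∈ Finset.univ.erase j, deg i := by
      refine Finset.sum_congr rfl fun i hi => ?_
      exact hstep i (Finset.ne_of_mem_erase hi)
    have h3 : ∑ i ∈ Finset.univ.erase j, deg i + deg j = d := by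
      rw [Finset.sum_erase_add Finset.univ _ (Finset.mem_univ j), hd]
    rw [h2] at h1
    linarith
  -- L *ᵥ h = (-d) • u
  have hLh : L *ᵥ h = (-d) • u := by
    funext i
    have hui : u i = (Pi.single j 1 : Fin n → ℝ) i - deg i / d := by
      rw [hu, Pi.sub_apply, hpi]
    by_cases hij : i = j
    · subst hij
      rw [hstepj, Pi.smul_apply, hui, Pi.single_eq_same, smul_eq_mul]
      field_simp
      ring
    · rw [hstep i hij, Pi.smul_apply, hui, Pi.single_eq_of_ne hij, smul_eq_mul]
      field_simp
      ring
  -- u is a multiple of L *ᵥ h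
  have hu2 : u = (-(1/d)) • (L *ᵥ h) := by
    rw [hLh, smul_smul]
    have : -(1/d) * -d = 1 := by field_simp
    rw [this, one_smul]
  -- L is symmetric
  have hLsym : Lᵀ = L := by
    rw [hL, Matrix.transpose_sub, Matrix.diagonal_transpose, hsym]
  -- the core identity via Penrose condition 1
  have hvm : h ᵥ* L = L *ᵥ h := by
    conv_lhs => rw [← hLsym]
    rw [Matrix.vecMul_transpose]
  have hcore : (L *ᵥ h) ⬝ᵥ (Ldag *ᵥ (L *ᵥ h)) = h ⬝ᵥ (L *ᵥ h) := by
    calc (L *ᵥ h) ⬝ᵥ (Ldag *ᵥ (L *ᵥ h))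
        = (h ᵥ* L) ⬝ᵥ ((Ldag * L) *ᵥ h) := by
          rw [Matrix.mulVec_mulVec, hvm]
      _ = h ⬝ᵥ (L *ᵥ ((Ldag * L) *ᵥ h)) :=
          (dotProduct_mulVec h L ((Ldag * L) *ᵥ h)).symm
      _ = h ⬝ᵥ (L *ᵥ h) := by
          rw [Matrix.mulVec_mulVec, ← mul_assoc, hMP1]
  -- h ⬝ᵥ u = -(Hc j)
  have hhu : h ⬝ᵥ u = -(Hc j) := by
    rw [hHc]
    simp only [dotProduct, hu, Pi.sub_apply, mul_sub, Finset.sum_sub_distrib]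
    have h1 : ∑ i, h i * (Pi.single j 1 : Fin n → ℝ) i = 0 := by
      simp [Pi.single_apply, mul_ite, Finset.sum_ite_eq', hh, hHdiag]
    have h2 : ∑ i, h i * pi' i = ∑ i, pi' i * H i j := by
      refine Finset.sum_congr rfl fun i _ => mul_comm _ _
    rw [h1, h2]
    ring
  -- assemble
  have hquad : u ⬝ᵥ (Ldag *ᵥ u) = (1/d)^2 * (h ⬝ᵥ (L *ᵥ h)) := by
    rw [hu2, Matrix.mulVec_smul, smul_dotProduct, dotProduct_smul, hcore]
    simp [smul_eq_mul]
    ring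
  have hfin : h ⬝ᵥ (L *ᵥ h) = d * Hc j := by
    rw [hLh, dotProduct_smul, smul_eq_mul, hhu]
    ring
  rw [hquad, hfin]
  field_simp
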